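/- Let P ⊆ M_ℝ be a reflexive polytope and let v, w be lattice points on the boundary of P. If v + w ≠ 0 and no facet of P contains both v and w, then v + w is a lattice point on the boundary of P. -/

import Mathlib

open Pointwise Matrix

/-- Ambient space `ℝ^d`. -/
abbrev E (d : ℕ) := Fin d → ℝ

/-- A point of the lattice `M ≅ ℤ^d`. -/
def IsLatticePt {d : ℕ} (x : E d) : Prop := ∀ i, ∃ n : ℤ, x i = (n : ℝ)

/-- The standard pairing between `N_ℝ` and `M_ℝ`. -/
def dot {d : ℕ} (x y : E d) : ℝ := ∑ i, x i * y i

/-- The dual (polar) polytope `P* = {x : ⟨x,y⟩ ≥ -1 ∀ y ∈ P}`. -/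
def polarDual {d : ℕ} (P : Set (E d)) : Set (E d) := {x | ∀ y ∈ P, -1 ≤ dot x y}

/-- A lattice polytope: convex hull of finitely many lattice points. -/
def IsLatticePolytope {d : ℕ} (P : Set (E d)) : Prop :=
  ∃ S : Finset (E d), (∀ x ∈ S, IsLatticePt x) ∧ P = convexHull ℝ (S : Set (E d))

/-- A reflexive polytope: a lattice polytope with `0` in its interior whose polar dual is
again a lattice polytope (i.e. the hull of its lattice points). -/
def IsReflexive {d : ℕ} (P : Set (E d)) : Prop :=
  IsLatticePolytope P ∧ 0 ∈ interior P ∧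
    polarDual P = convexHull ℝ {x | x ∈ polarDual P ∧ IsLatticePt x}

/-- A facet: a nonempty exposed face of dimension `d - 1`. -/
def IsFacet {d : ℕ} (P F : Set (E d)) : Prop :=
  IsExposed ℝ P F ∧ F.Nonempty ∧
    Module.finrank ℝ (affineSpan ℝ F).direction = d - 1

/-- Simplicial polytope: every facet is a simplex (hull of `d` affinely independent points). -/
def IsSimplicial {d : ℕ} (P : Set (E d)) : Prop :=
  ∀ F, IsFacet P F → ∃ v : Fin d → E d,
    AffineIndependent ℝ v ∧ F = convexHull ℝ (Set.range v)

/-- Pseudo-symmetric: some facet `F` has `-F` also a facet. -/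
def IsPseudoSymmetric {d : ℕ} (P : Set (E d)) : Prop :=
  ∃ F, IsFacet P F ∧ IsFacet P (-F)

/-- Application of an integer matrix to a point of `ℝ^d`. -/
def applyU {d : ℕ} (U : Matrix (Fin d) (Fin d) ℤ) (x : E d) : E d :=
  (U.map (Int.cast : ℤ → ℝ)) *ᵥ x

/-- Wirth matrix: block form `[[2·Id_f, 0], [C, Id_{d-f}]]` with `C` a `{0,1}`-matrix
each of whose columns has an odd number of `1`'s. -/
def IsWirth {d : ℕ} (A : Matrix (Fin d) (Fin d) ℤ) : Prop :=
  ∃ f : ℕ, f < d ∧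
    (∀ i j : Fin d, (i : ℕ) < f → (j : ℕ) < f → A i j = if i = j then 2 else 0) ∧
    (∀ i j : Fin d, (i : ℕ) < f → f ≤ (j : ℕ) → A i j = 0) ∧
    (∀ i j : Fin d, f ≤ (i : ℕ) → (j : ℕ) < f → A i j = 0 ∨ A i j = 1) ∧
    (∀ i j : Fin d, f ≤ (i : ℕ) → f ≤ (j : ℕ) → A i j = if i = j then 1 else 0) ∧
    (∀ j : Fin d, (j : ℕ) < f →
      Odd (Finset.univ.filter (fun i : Fin d => f ≤ (i : ℕ) ∧ A i j = 1)).card)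

namespace RBS

variable {d : ℕ}

lemma dot_comm (x y : E d) : dot x y = dot y x :=
  Finset.sum_congr rfl fun i _ => mul_comm _ _

lemma dot_add_right (u x y : E d) : dot u (x + y) = dot u x + dot u y := by
  unfold dot
  rw [← Finset.sum_add_distrib]
  exact Finset.sum_congr rfl fun i _ => by simp [mul_add]

lemma dot_smul_right (u : E d) (c : ℝ) (x : E d) : dot u (c • x) = c * dot u x := by
  unfold dot
  rw [Finset.mul_sum]
  exact Finset.sum_congr rfl fun i _ => by simp; ring

lemma dot_add_left (x y u : E d) : dot (x + y) u = dot x u + dot y u := by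
  rw [dot_comm, dot_add_right, dot_comm u x, dot_comm u y]

lemma dot_smul_left (c : ℝ) (x u : E d) : dot (c • x) u = c * dot x u := by
  rw [dot_comm, dot_smul_right, dot_comm u x]

lemma dot_zero_right (u : E d) : dot u 0 = 0 := by simp [dot]

lemma dot_zero_left (u : E d) : dot 0 u = 0 := by simp [dot]

lemma dot_sub_right (u x y : E d) : dot u (x - y) = dot u x - dot u y := by
  have h := dot_add_right u (x - y) y
  simp at h; linarith

lemma dot_neg_left (x u : E d) : dot (-x) u = -dot x u := by
  have : dot (-x) u + dot x u = 0 := by rw [← dot_add_left]; simp [dot_zero_left]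
  linarith

lemma isLinearMap_dot_right (u : E d) : IsLinearMap ℝ (fun x => dot u x) :=
  ⟨dot_add_right u, fun c x => dot_smul_right u c x⟩

lemma isLinearMap_dot_left (u : E d) : IsLinearMap ℝ (fun x => dot x u) :=
  ⟨fun x y => dot_add_left x y u, fun c x => dot_smul_left c x u⟩

noncomputable def dotLM (u : E d) : E d →ₗ[ℝ] ℝ :=
  IsLinearMap.mk' _ (isLinearMap_dot_right u)

@[simp] lemma dotLM_apply (u x : E d) : dotLM u x = dot u x := rfl

noncomputable def dotL (u : E d) : E d →L[ℝ] ℝ :=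
  LinearMap.toContinuousLinearMap (dotLM u)

@[simp] lemma dotL_apply (u x : E d) : dotL u x = dot u x := rfl

lemma dot_self_nonneg (x : E d) : 0 ≤ dot x x :=
  Finset.sum_nonneg fun i _ => mul_self_nonneg _

lemma dot_self_pos {x : E d} (hx : x ≠ 0) : 0 < dot x x := by
  rcases lt_or_eq_of_le (dot_self_nonneg x) with h | h
  · exact h
  · exfalso
    apply hx
    funext i
    have := (Finset.sum_eq_zero_iff_of_nonneg (fun i _ => mul_self_nonneg (x i))).1 h.symm
    have := this i (Finset.mem_univ i)
    simpa [mul_self_eq_zero] using this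

lemma dot_sum_right {ι : Type*} (u : E d) (t : Finset ι) (f : ι → E d) :
    dot u (∑ i ∈ t, f i) = ∑ i ∈ t, dot u (f i) := by
  exact map_sum (dotLM u) f t

lemma dot_int {u v : E d} (hu : IsLatticePt u) (hv : IsLatticePt v) :
    ∃ n : ℤ, dot u v = (n : ℝ) := by
  choose a ha using hu
  choose b hb using hv
  refine ⟨∑ i, a i * b i, ?_⟩
  unfold dot
  push_cast
  exact Finset.sum_congr rfl fun i _ => by rw [ha i, hb i]

lemma abs_dot_le (x y : E d) : |dot x y| ≤ d * ‖x‖ * ‖y‖ := by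
  calc |dot x y| ≤ ∑ i, |x i * y i| := Finset.abs_sum_le_sum_abs _ _
    _ ≤ ∑ _i : Fin d, ‖x‖ * ‖y‖ := by
        refine Finset.sum_le_sum fun i _ => ?_
        rw [abs_mul]
        have h1 : |x i| ≤ ‖x‖ := norm_le_pi_norm x i
        have h2 : |y i| ≤ ‖y‖ := norm_le_pi_norm y i
        exact mul_le_mul h1 h2 (abs_nonneg _) (norm_nonneg _)
    _ = d * ‖x‖ * ‖y‖ := by simp [Finset.sum_const, mul_assoc]


open Module

lemma finrank_E : Module.finrank ℝ (E d) = d := Module.finrank_fin_fun ℝ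

lemma dotLM_ne_zero {u : E d} (hu : u ≠ 0) : dotLM u ≠ 0 := by
  intro h
  have : dot u u = 0 := by
    have := congrArg (fun f => f u) h
    simpa using this
  exact absurd this (ne_of_gt (dot_self_pos hu))

lemma finrank_ker_dotLM {u : E d} (hu : u ≠ 0) :
    Module.finrank ℝ (LinearMap.ker (dotLM u)) = d - 1 := by
  have h := LinearMap.finrank_range_add_finrank_ker (dotLM u)
  rw [finrank_E] at h
  have hr1 : Module.finrank ℝ (LinearMap.range (dotLM u)) = 1 := by
    have hle : Module.finrank ℝ (LinearMap.range (dotLM u)) ≤ 1 := by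
      have := Submodule.finrank_le (LinearMap.range (dotLM u))
      simpa using this
    have hne : LinearMap.range (dotLM u) ≠ ⊥ := by
      intro hb
      exact dotLM_ne_zero hu (LinearMap.range_eq_bot.1 hb)
    have hpos : Module.finrank ℝ (LinearMap.range (dotLM u)) ≠ 0 := by
      intro h0
      exact hne (Submodule.finrank_eq_zero.1 h0)
    omega
  omega

lemma finrank_vectorSpan_le {T : Set (E d)} {u : E d} {m : ℝ} (hu : u ≠ 0)
    (hT : ∀ x ∈ T, dot u x = m) :
    Module.finrank ℝ (vectorSpan ℝ T) ≤ d - 1 := by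
  have hle : vectorSpan ℝ T ≤ LinearMap.ker (dotLM u) := by
    rw [vectorSpan_def]
    refine Submodule.span_le.2 ?_
    rintro z hz
    rcases Set.mem_sub.1 hz with ⟨a, ha, b, hb, rfl⟩
    simp only [SetLike.mem_coe, LinearMap.mem_ker, dotLM_apply]
    rw [show a - b = a - b from rfl, dot_sub_right, hT a ha, hT b hb, sub_self]
  calc Module.finrank ℝ (vectorSpan ℝ T) ≤ Module.finrank ℝ (LinearMap.ker (dotLM u)) :=
        Submodule.finrank_mono hle
    _ = d - 1 := finrank_ker_dotLM hu

lemma exists_dot_orth (V : Submodule ℝ (E d)) (hV : Module.finrank ℝ V < d) :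
    ∃ w : E d, w ≠ 0 ∧ ∀ v ∈ V, dot w v = 0 := by
  let Φ : E d →ₗ[ℝ] (V →ₗ[ℝ] ℝ) :=
    { toFun := fun x => (dotLM x).comp V.subtype
      map_add' := fun x y => LinearMap.ext fun v => by
        simp [dot_add_left]
      map_smul' := fun c x => LinearMap.ext fun v => by
        simp [dot_smul_left] }
  have hker : LinearMap.ker Φ ≠ ⊥ := by
    have h := LinearMap.finrank_range_add_finrank_ker Φ
    rw [finrank_E] at h
    have h2 : Module.finrank ℝ (LinearMap.range Φ) ≤ Module.finrank ℝ V := by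
      have := Submodule.finrank_le (LinearMap.range Φ)
      rwa [Module.finrank_linearMap_self] at this
    intro hbot
    rw [hbot, finrank_bot] at h
    omega
  obtain ⟨w, hwk, hw0⟩ := Submodule.exists_mem_ne_zero_of_ne_bot hker
  refine ⟨w, hw0, fun v hv => ?_⟩
  have h := LinearMap.mem_ker.1 hwk
  have := congrArg (fun f => f (⟨v, hv⟩ : V)) h
  exact this

open Finset in
noncomputable def argmin (u : E d) (S : Finset (E d)) : Finset (E d) :=
  @Finset.filter _ (fun s => ∀ s' ∈ S, dot u s ≤ dot u s') (Classical.decPred _) S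

lemma mem_argmin {u : E d} {S : Finset (E d)} {s : E d} :
    s ∈ argmin u S ↔ s ∈ S ∧ ∀ s' ∈ S, dot u s ≤ dot u s' := by
  exact @Finset.mem_filter _ _ (Classical.decPred _) S s

lemma argmin_subset {u : E d} {S : Finset (E d)} : argmin u S ⊆ S :=
  fun s hs => (mem_argmin.1 hs).1

lemma argmin_nonempty {u : E d} {S : Finset (E d)} (hS : S.Nonempty) :
    (argmin u S).Nonempty := by
  obtain ⟨b, hb, hmin⟩ := S.exists_min_image (fun s => dot u s) hS
  exact ⟨b, mem_argmin.2 ⟨hb, hmin⟩⟩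

lemma dot_eq_on_argmin {u : E d} {S : Finset (E d)} {s t : E d}
    (hs : s ∈ argmin u S) (ht : t ∈ argmin u S) : dot u s = dot u t :=
  le_antisymm ((mem_argmin.1 hs).2 t (argmin_subset ht))
    ((mem_argmin.1 ht).2 s (argmin_subset hs))

lemma not_const {P : Set (E d)} (h0 : (0 : E d) ∈ interior P) {w : E d} (hw : w ≠ 0)
    {c : ℝ} (hc : ∀ y ∈ P, dot w y = c) : False := by
  obtain ⟨ε, hε, hball⟩ := Metric.isOpen_iff.1 isOpen_interior 0 h0
  have hb : Metric.ball (0 : E d) ε ⊆ P := hball.trans interior_subset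
  have h0P : (0 : E d) ∈ P := hb (by simp [hε])
  have hc0 : c = 0 := by rw [← hc 0 h0P, dot_zero_right]
  have hwn : (0:ℝ) < ‖w‖ := norm_pos_iff.2 hw
  set z : E d := (ε / (2 * ‖w‖)) • w with hz
  have hzb : z ∈ Metric.ball (0 : E d) ε := by
    rw [Metric.mem_ball, dist_zero_right, hz, norm_smul, Real.norm_eq_abs,
      abs_of_pos (by positivity : (0:ℝ) < ε / (2 * ‖w‖))]
    have heq : ε / (2 * ‖w‖) * ‖w‖ = ε / 2 := by field_simp
    rw [heq]; linarith
  have := hc z (hb hzb)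
  rw [hc0, hz, dot_smul_right] at this
  have hww : dot w w = 0 := by
    have hεw : ε / (2 * ‖w‖) ≠ 0 := by positivity
    exact (mul_eq_zero.1 this).resolve_left hεw
  exact absurd hww (ne_of_gt (dot_self_pos hw))

lemma step {S : Finset (E d)} {u w s₀ : E d}
    (hs₀ : s₀ ∈ argmin u S)
    (hwT : ∀ s ∈ argmin u S, dot w s = dot w s₀)
    (hwu : dot u w = 0) (hu : u ≠ 0)
    (hex : ∃ s ∈ S, dot w s < dot w s₀) :
    ∃ u₂ : E d, u₂ ≠ 0 ∧ argmin u S ⊆ argmin u₂ S ∧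
      (argmin u S).card < (argmin u₂ S).card := by
  classical
  set c := dot w s₀ with hc
  set m := dot u s₀ with hm
  have hmin : ∀ s ∈ S, m ≤ dot u s := (mem_argmin.1 hs₀).2
  have hTm : ∀ s ∈ argmin u S, dot u s = m := fun s hs => dot_eq_on_argmin hs hs₀
  have hnotT : ∀ s ∈ S, s ∉ argmin u S → m < dot u s := by
    intro s hs hns
    rcases lt_or_ge m (dot u s) with h | h
    · exact h
    · exfalso
      apply hns
      refine mem_argmin.2 ⟨hs, fun s' hs' => le_trans h (hmin s' hs')⟩
  set E' := S.filter (fun s => dot w s < c) with hE'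
  have hE'ne : E'.Nonempty := by
    obtain ⟨s, hsS, hsl⟩ := hex
    exact ⟨s, Finset.mem_filter.2 ⟨hsS, hsl⟩⟩
  set ts : E d → ℝ := fun s => (dot u s - m) / (c - dot w s) with hts
  obtain ⟨sst, hsstE, hsst⟩ := E'.exists_min_image ts hE'ne
  have hsstS : sst ∈ S := (Finset.mem_filter.1 hsstE).1
  have hsstc : dot w sst < c := (Finset.mem_filter.1 hsstE).2
  have hsstT : sst ∉ argmin u S := fun h => absurd (hwT sst h) (ne_of_lt hsstc)
  set t := ts sst with ht
  have htpos : 0 < t := by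
    apply div_pos
    · exact sub_pos.2 (hnotT sst hsstS hsstT)
    · exact sub_pos.2 hsstc
  set u₂ := u + t • w with hu₂def
  have hdot₂ : ∀ s : E d, dot u₂ s = dot u s + t * dot w s := by
    intro s
    rw [hu₂def, dot_add_left, dot_smul_left]
  have hu₂ : u₂ ≠ 0 := by
    intro h
    have h1 : dot u₂ u = 0 := by rw [h, dot_zero_left]
    rw [hu₂def, dot_add_left, dot_smul_left, dot_comm w u, hwu, mul_zero, add_zero] at h1
    exact absurd h1 (ne_of_gt (dot_self_pos hu))
  have key : ∀ s ∈ S, m + t * c ≤ dot u₂ s := by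
    intro s hs
    rw [hdot₂]
    by_cases hcs : dot w s < c
    · have hsE : s ∈ E' := Finset.mem_filter.2 ⟨hs, hcs⟩
      have hle : t ≤ ts s := hsst s hsE
      have hpos : 0 < c - dot w s := sub_pos.2 hcs
      have h1 : t * (c - dot w s) ≤ dot u s - m := by
        rw [hts] at hle
        calc t * (c - dot w s) ≤ ((dot u s - m) / (c - dot w s)) * (c - dot w s) :=
              mul_le_mul_of_nonneg_right hle (le_of_lt hpos)
          _ = dot u s - m := div_mul_cancel₀ _ (ne_of_gt hpos)
      nlinarith
    · push_neg at hcs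
      have h1 : m ≤ dot u s := hmin s hs
      have h2 : t * c ≤ t * dot w s := mul_le_mul_of_nonneg_left hcs (le_of_lt htpos)
      linarith
  have memArg : ∀ s ∈ S, dot u₂ s = m + t * c → s ∈ argmin u₂ S := by
    intro s hs he
    exact mem_argmin.2 ⟨hs, fun s' hs' => he ▸ key s' hs'⟩
  have hsub : argmin u S ⊆ argmin u₂ S := by
    intro s hsa
    refine memArg s (argmin_subset hsa) ?_
    rw [hdot₂, hTm s hsa, hwT s hsa]
  have hsst₂ : sst ∈ argmin u₂ S := by
    refine memArg sst hsstS ?_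
    rw [hdot₂]
    have hpos : c - dot w sst ≠ 0 := ne_of_gt (sub_pos.2 hsstc)
    have h1 : t * (c - dot w sst) = dot u sst - m := by
      rw [ht, hts]
      exact div_mul_cancel₀ _ hpos
    nlinarith [h1]
  have hss : argmin u S ⊂ argmin u₂ S :=
    (Finset.ssubset_iff_of_subset hsub).2 ⟨sst, hsst₂, hsstT⟩
  exact ⟨u₂, hu₂, hsub, Finset.card_lt_card hss⟩

lemma grow {S : Finset (E d)} (h0 : (0 : E d) ∈ interior (convexHull ℝ (S : Set (E d))))
    (hd : 0 < d) :
    ∀ (k : ℕ) (u : E d), u ≠ 0 → S.card - (argmin u S).card ≤ k →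
    ∃ u', u' ≠ 0 ∧ argmin u S ⊆ argmin u' S ∧
      Module.finrank ℝ (vectorSpan ℝ ((argmin u' S : Set (E d)))) = d - 1 := by
  have hSne : S.Nonempty := by
    rcases S.eq_empty_or_nonempty with h | h
    · exfalso
      rw [h] at h0
      simp at h0
    · exact h
  intro k
  induction k with
  | zero =>
    intro u hu hk
    exfalso
    have hTS : argmin u S = S := Finset.eq_of_subset_of_card_le argmin_subset (by omega)
    obtain ⟨s₀, hs₀⟩ := hSne
    have hs₀' : s₀ ∈ argmin u S := by rw [hTS]; exact hs₀
    have hconst : ∀ y ∈ convexHull ℝ (S : Set (E d)), dot u y = dot u s₀ := by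
      apply convexHull_min ?_ (convex_hyperplane (isLinearMap_dot_right u) (dot u s₀))
      intro s hs
      exact dot_eq_on_argmin (by rw [hTS]; exact_mod_cast hs) hs₀'
    exact not_const h0 hu hconst
  | succ k ih =>
    intro u hu hk
    obtain ⟨s₀, hs₀⟩ := argmin_nonempty (u := u) hSne
    have hTm : ∀ x ∈ ((argmin u S : Finset (E d)) : Set (E d)), dot u x = dot u s₀ := by
      intro x hx
      exact dot_eq_on_argmin (by exact_mod_cast hx) hs₀
    have hfle : Module.finrank ℝ (vectorSpan ℝ ((argmin u S : Finset (E d)) : Set (E d))) ≤ d - 1 :=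
      finrank_vectorSpan_le hu hTm
    by_cases hfr : Module.finrank ℝ (vectorSpan ℝ ((argmin u S : Finset (E d)) : Set (E d))) = d - 1
    · exact ⟨u, hu, subset_rfl, hfr⟩
    · have hlt : Module.finrank ℝ (vectorSpan ℝ ((argmin u S : Finset (E d)) : Set (E d))) < d - 1 :=
        lt_of_le_of_ne hfle hfr
      have h1 := Submodule.finrank_sup_add_finrank_inf_eq
        (vectorSpan ℝ ((argmin u S : Finset (E d)) : Set (E d))) (Submodule.span ℝ {u})
      rw [finrank_span_singleton hu] at h1
      have hVfr : Module.finrank ℝ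
          ↥(vectorSpan ℝ ((argmin u S : Finset (E d)) : Set (E d)) ⊔ Submodule.span ℝ {u}) < d := by
        omega
      obtain ⟨w, hw0, hworth⟩ := exists_dot_orth _ hVfr
      have hwu : dot w u = 0 :=
        hworth u (Submodule.mem_sup_right (Submodule.mem_span_singleton_self u))
      have hwT : ∀ s ∈ argmin u S, dot w s = dot w s₀ := by
        intro s hs
        have := hworth (s - s₀) (Submodule.mem_sup_left
          (vsub_mem_vectorSpan ℝ (Finset.mem_coe.2 hs) (Finset.mem_coe.2 hs₀)))
        rw [dot_sub_right] at this
        linarith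
      have hneq : ∃ s ∈ S, dot w s ≠ dot w s₀ := by
        by_contra h
        push_neg at h
        have hconst : ∀ y ∈ convexHull ℝ (S : Set (E d)), dot w y = dot w s₀ :=
          convexHull_min h (convex_hyperplane (isLinearMap_dot_right w) (dot w s₀))
        exact not_const h0 hw0 hconst
      obtain ⟨s₁, hs₁S, hs₁⟩ := hneq
      have hstep : ∃ u₂ : E d, u₂ ≠ 0 ∧ argmin u S ⊆ argmin u₂ S ∧
          (argmin u S).card < (argmin u₂ S).card := by
        rcases lt_or_gt_of_ne hs₁ with hlt' | hgt'
        · exact step hs₀ hwT (by rw [dot_comm]; exact hwu) hu ⟨s₁, hs₁S, hlt'⟩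
        · refine step (w := -w) hs₀ ?_ ?_ hu ⟨s₁, hs₁S, ?_⟩
          · intro s hs
            rw [dot_neg_left, dot_neg_left, hwT s hs]
          · rw [dot_comm, dot_neg_left, hwu, neg_zero]
          · rw [dot_neg_left, dot_neg_left]
            linarith
      obtain ⟨u₂, hu₂, hsub₂, hcard₂⟩ := hstep
      have hkk : S.card - (argmin u₂ S).card ≤ k := by
        have h1 : (argmin u₂ S).card ≤ S.card := Finset.card_le_card argmin_subset
        omega
      obtain ⟨u', hu', hsub', hfr'⟩ := ih u₂ hu₂ hkk
      exact ⟨u', hu', hsub₂.trans hsub', hfr'⟩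

lemma mem_hull_argmin {S : Finset (E d)} {z x : E d}
    (hx : x ∈ convexHull ℝ (S : Set (E d))) (hmin : ∀ s ∈ S, dot z x ≤ dot z s) :
    x ∈ convexHull ℝ ((argmin z S : Finset (E d)) : Set (E d)) := by
  classical
  rw [Finset.convexHull_eq] at hx
  obtain ⟨wt, hwt0, hwt1, hxc⟩ := hx
  rw [Finset.centerMass_eq_of_sum_1 _ _ hwt1] at hxc
  simp only [id] at hxc
  have hdx : dot z x = ∑ y ∈ S, wt y * dot z y := by
    rw [← hxc, dot_sum_right]
    exact Finset.sum_congr rfl fun y _ => dot_smul_right _ _ _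
  have hsum0 : ∑ y ∈ S, wt y * (dot z y - dot z x) = 0 := by
    have h : ∑ y ∈ S, wt y * (dot z y - dot z x)
        = (∑ y ∈ S, wt y * dot z y) - (∑ y ∈ S, wt y) * dot z x := by
      rw [Finset.sum_mul, ← Finset.sum_sub_distrib]
      exact Finset.sum_congr rfl fun y _ => by ring
    rw [h, ← hdx, hwt1, one_mul, sub_self]
  have hzero : ∀ y ∈ S, wt y * (dot z y - dot z x) = 0 :=
    (Finset.sum_eq_zero_iff_of_nonneg
      (fun y hy => mul_nonneg (hwt0 y hy) (sub_nonneg.2 (hmin y hy)))).1 hsum0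
  have hwz : ∀ y ∈ S, y ∉ argmin z S → wt y = 0 := by
    intro y hy hyT
    rcases mul_eq_zero.1 (hzero y hy) with h | h
    · exact h
    · exfalso
      apply hyT
      have hym : dot z y = dot z x := by linarith [sub_eq_zero.1 h]
      exact mem_argmin.2 ⟨hy, fun s' hs' => hym ▸ hmin s' hs'⟩
  rw [Finset.convexHull_eq]
  have hsumT : ∑ y ∈ argmin z S, wt y = 1 := by
    rw [← hwt1]
    exact Finset.sum_subset argmin_subset (fun y hy hyT => hwz y hy hyT)
  refine ⟨wt, fun y hy => hwt0 y (argmin_subset hy), hsumT, ?_⟩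
  rw [Finset.centerMass_eq_of_sum_1 _ _ hsumT]
  simp only [id]
  rw [← hxc]
  exact Finset.sum_subset argmin_subset
    (fun y hy hyT => by rw [hwz y hy hyT, zero_smul])

lemma exists_facet_above {S : Finset (E d)}
    (h0 : (0 : E d) ∈ interior (convexHull ℝ (S : Set (E d)))) (hd : 0 < d)
    {u : E d} (hu : u ≠ 0) :
    ∃ F : Set (E d), IsFacet (convexHull ℝ (S : Set (E d))) F ∧
      ∀ x ∈ convexHull ℝ (S : Set (E d)),
        (∀ y ∈ convexHull ℝ (S : Set (E d)), dot u x ≤ dot u y) → x ∈ F := by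
  classical
  obtain ⟨u', hu', hsub, hfr⟩ := grow h0 hd S.card u hu (by omega)
  have hSne : S.Nonempty := by
    rcases S.eq_empty_or_nonempty with h | h
    · exfalso; rw [h] at h0; simp at h0
    · exact h
  obtain ⟨s₀, hs₀⟩ := argmin_nonempty (u := u') hSne
  set P : Set (E d) := convexHull ℝ (S : Set (E d)) with hPdef
  set T : Finset (E d) := argmin u' S with hTdef
  set m : ℝ := dot u' s₀ with hmdef
  have hminS : ∀ s ∈ S, m ≤ dot u' s := (mem_argmin.1 hs₀).2
  have hminP : ∀ y ∈ P, m ≤ dot u' y :=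
    convexHull_min hminS (convex_halfSpace_ge (isLinearMap_dot_right u') m)
  set F : Set (E d) := convexHull ℝ (T : Set (E d)) with hFdef
  have hFP : F ⊆ P := convexHull_mono (by exact_mod_cast argmin_subset)
  have hs₀P : s₀ ∈ P := subset_convexHull ℝ _ (Finset.mem_coe.2 (argmin_subset hs₀))
  have hFm : ∀ x ∈ F, dot u' x = m := by
    apply convexHull_min ?_ (convex_hyperplane (isLinearMap_dot_right u') m)
    intro s hs
    exact dot_eq_on_argmin (Finset.mem_coe.1 hs) hs₀
  have hPmF : ∀ x ∈ P, dot u' x = m → x ∈ F := by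
    intro x hxP hxm
    exact mem_hull_argmin hxP (fun s hs => by rw [hxm]; exact hminS s hs)
  have hdesc : F = {x ∈ P | ∀ y ∈ P, dot u' x ≤ dot u' y} := by
    ext x
    constructor
    · intro hx
      exact ⟨hFP hx, fun y hy => (hFm x hx) ▸ hminP y hy⟩
    · rintro ⟨hxP, hxm⟩
      exact hPmF x hxP (le_antisymm (hxm s₀ hs₀P) (hminP x hxP))
  refine ⟨F, ⟨?_, ⟨s₀, subset_convexHull ℝ _ (Finset.mem_coe.2 hs₀)⟩, ?_⟩, ?_⟩
  · intro _
    refine ⟨dotL (-u'), ?_⟩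
    rw [hdesc]
    ext x
    simp only [Set.mem_setOf_eq, dotL_apply, dot_neg_left, neg_le_neg_iff]
  · rw [hFdef, affineSpan_convexHull, direction_affineSpan]
    exact hfr
  · intro x hxP hxmin
    have hx' : x ∈ convexHull ℝ ((argmin u S : Finset (E d)) : Set (E d)) :=
      mem_hull_argmin hxP (fun s hs => hxmin s (subset_convexHull ℝ _ (Finset.mem_coe.2 hs)))
    exact convexHull_mono (by exact_mod_cast hsub) hx'

lemma repr_functional (f : E d →L[ℝ] ℝ) :
    ∃ uv : E d, ∀ y : E d, f y = dot uv y := by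
  classical
  refine ⟨fun i => f (fun j => if i = j then 1 else 0), fun y => ?_⟩
  conv_lhs => rw [pi_eq_sum_univ y, map_sum]
  unfold dot
  refine Finset.sum_congr rfl fun i _ => ?_
  rw [f.map_smul]
  simp [smul_eq_mul, mul_comm]

end RBS

open RBS

theorem reflexive_boundary_sum (d : ℕ) (P : Set (E d)) (hP : IsReflexive P)
    (v w : E d) (hv : IsLatticePt v) (hw : IsLatticePt w)
    (hvb : v ∈ frontier P) (hwb : w ∈ frontier P)
    (hne : v + w ≠ 0)
    (hfac : ∀ F, IsFacet P F → ¬(v ∈ F ∧ w ∈ F)) :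
    v + w ∈ frontier P ∧ IsLatticePt (v + w) := by
  classical
  obtain ⟨⟨S, hSlat, hPS⟩, h0, hdual⟩ := hP
  rcases Nat.eq_zero_or_pos d with hd0 | hd
  · exfalso
    apply hne
    subst hd0
    funext i
    exact i.elim0
  have hlat : IsLatticePt (v + w) := by
    intro i
    obtain ⟨a, ha⟩ := hv i
    obtain ⟨b, hb⟩ := hw i
    exact ⟨a + b, by simp [ha, hb]⟩
  have hPcpt : IsCompact P := by
    rw [hPS]; exact S.finite_toSet.isCompact_convexHull ℝ
  have hPc : IsClosed P := hPcpt.isClosed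
  have hPconv : Convex ℝ P := by rw [hPS]; exact convex_convexHull ℝ _
  have hvP : v ∈ P := by
    have := frontier_subset_closure hvb
    rwa [hPc.closure_eq] at this
  have hwP : w ∈ P := by
    have := frontier_subset_closure hwb
    rwa [hPc.closure_eq] at this
  have h0P : (0 : E d) ∈ P := interior_subset h0
  have h0S : (0 : E d) ∈ interior (convexHull ℝ (S : Set (E d))) := by rw [← hPS]; exact h0
  -- key: lattice dual points pair to ≥ -1 with v + w
  have hkey : ∀ z : E d, z ∈ polarDual P → IsLatticePt z → -1 ≤ dot z (v + w) := by
    intro z hzP hzlat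
    obtain ⟨a, ha⟩ := dot_int hzlat hv
    obtain ⟨b, hb⟩ := dot_int hzlat hw
    have hav : -1 ≤ dot z v := hzP v hvP
    have hbw : -1 ≤ dot z w := hzP w hwP
    rw [dot_add_right, ha, hb]
    by_cases hab : a = -1 ∧ b = -1
    · exfalso
      have hz0 : z ≠ 0 := by
        intro h
        rw [h, dot_zero_left, hab.1] at ha
        norm_num at ha
      obtain ⟨F, hF, hFsub⟩ := exists_facet_above h0S hd hz0
      refine hfac F (by rw [hPS]; exact hF) ⟨?_, ?_⟩
      · refine hFsub v (by rw [← hPS]; exact hvP) ?_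
        intro y hy
        rw [ha, hab.1]
        push_cast
        exact hzP y (by rw [hPS]; exact hy)
      · refine hFsub w (by rw [← hPS]; exact hwP) ?_
        intro y hy
        rw [hb, hab.2]
        push_cast
        exact hzP y (by rw [hPS]; exact hy)
    · have ha' : (-1 : ℤ) ≤ a := by
        have : ((-1 : ℤ) : ℝ) ≤ (a : ℝ) := by rw [← ha]; exact_mod_cast hav
        exact_mod_cast this
      have hb' : (-1 : ℤ) ≤ b := by
        have : ((-1 : ℤ) : ℝ) ≤ (b : ℝ) := by rw [← hb]; exact_mod_cast hbw
        exact_mod_cast this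
      have : (-1 : ℤ) ≤ a + b := by omega
      have : ((-1 : ℤ) : ℝ) ≤ ((a + b : ℤ) : ℝ) := by exact_mod_cast this
      push_cast at this ⊢
      linarith
  -- v + w ∈ P
  have hvwP : v + w ∈ P := by
    by_contra hc
    obtain ⟨f, c, hfP, hfx⟩ := geometric_hahn_banach_closed_point hPconv hPc hc
    have hcpos : (0 : ℝ) < c := by
      have := hfP 0 h0P
      simpa using this
    obtain ⟨uv, hfu⟩ := repr_functional f
    set zd : E d := (-(c⁻¹)) • uv with hzd
    have hzdP : zd ∈ polarDual P := by
      intro y hy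
      rw [hzd, dot_smul_left]
      have h1 : dot uv y < c := by rw [← hfu]; exact hfP y hy
      have h2 : dot uv y / c < 1 := (div_lt_one hcpos).2 h1
      have : -(c⁻¹) * dot uv y = -(dot uv y / c) := by field_simp
      rw [this]
      linarith
    have hzdlt : dot zd (v + w) < -1 := by
      rw [hzd, dot_smul_left]
      have h1 : c < dot uv (v + w) := by rw [← hfu]; exact hfx
      have h2 : (1 : ℝ) < dot uv (v + w) / c := (one_lt_div hcpos).2 h1
      have : -(c⁻¹) * dot uv (v + w) = -(dot uv (v + w) / c) := by field_simp
      rw [this]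
      linarith
    have hhs : polarDual P ⊆ {z : E d | -1 ≤ dot z (v + w)} := by
      rw [hdual]
      refine convexHull_min ?_ (convex_halfSpace_ge (isLinearMap_dot_left (v + w)) (-1))
      rintro z ⟨hz1, hz2⟩
      exact hkey z hz1 hz2
    exact absurd (hhs hzdP) (not_le.2 hzdlt)
  -- v + w not in the interior
  have hvwI : v + w ∉ interior P := by
    intro hint
    have hkey2 : ∀ z : E d, z ∈ polarDual P → IsLatticePt z → 0 ≤ dot z (v + w) := by
      intro z hz hzl
      obtain ⟨n, hn⟩ := dot_int hzl hlat
      have h1 : -1 ≤ dot z (v + w) := hz _ hvwP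
      have hne1 : dot z (v + w) ≠ -1 := by
        intro heq
        have hz0 : z ≠ 0 := by
          intro h
          rw [h, dot_zero_left] at heq
          norm_num at heq
        obtain ⟨ε, hε, hball⟩ := Metric.isOpen_iff.1 isOpen_interior _ hint
        have hzn : (0 : ℝ) < ‖z‖ := norm_pos_iff.2 hz0
        set δ : ℝ := ε / (2 * ‖z‖) with hδ
        have hδpos : 0 < δ := by positivity
        have hyP : (v + w) - δ • z ∈ P := by
          apply interior_subset
          apply hball
          rw [Metric.mem_ball, dist_eq_norm]
          have : (v + w) - δ • z - (v + w) = -(δ • z) := by abel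
          rw [this, norm_neg, norm_smul, Real.norm_eq_abs, abs_of_pos hδpos]
          have heq2 : δ * ‖z‖ = ε / 2 := by rw [hδ]; field_simp
          rw [heq2]
          linarith
        have h2 := hz _ hyP
        rw [dot_sub_right, heq, dot_smul_right] at h2
        have h3 : 0 < δ * dot z z := mul_pos hδpos (dot_self_pos hz0)
        linarith
      have hn1 : (-1 : ℤ) ≤ n := by
        have : ((-1 : ℤ) : ℝ) ≤ (n : ℝ) := by rw [← hn]; exact_mod_cast h1
        exact_mod_cast this
      have hnne : n ≠ -1 := by
        intro h
        apply hne1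
        rw [hn, h]
        norm_num
      have : (0 : ℤ) ≤ n := by omega
      rw [hn]
      exact_mod_cast this
    have hhs2 : polarDual P ⊆ {z : E d | 0 ≤ dot z (v + w)} := by
      rw [hdual]
      refine convexHull_min ?_ (convex_halfSpace_ge (isLinearMap_dot_left (v + w)) 0)
      rintro z ⟨hz1, hz2⟩
      exact hkey2 z hz1 hz2
    obtain ⟨R, hR⟩ := hPcpt.isBounded.exists_norm_le
    set x : E d := v + w with hx
    have hxn : (0 : ℝ) < ‖x‖ := norm_pos_iff.2 hne
    set δ' : ℝ := (d * ‖x‖ * (|R| + 1))⁻¹ with hδ'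
    have hδ'pos : 0 < δ' := by
      rw [hδ']
      have : (0:ℝ) < d := by exact_mod_cast hd
      positivity
    have hmem : (-δ') • x ∈ polarDual P := by
      intro y hy
      rw [dot_smul_left]
      have hb1 : |dot x y| ≤ d * ‖x‖ * ‖y‖ := abs_dot_le x y
      have hb2 : ‖y‖ ≤ |R| := le_trans (hR y hy) (le_abs_self R)
      have hb3 : |dot x y| ≤ d * ‖x‖ * (|R| + 1) := by
        calc |dot x y| ≤ d * ‖x‖ * ‖y‖ := hb1
          _ ≤ d * ‖x‖ * (|R| + 1) := by
              apply mul_le_mul_of_nonneg_left (by linarith) (by positivity)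
      have hb4 : δ' * |dot x y| ≤ 1 := by
        rw [hδ']
        rw [inv_mul_le_iff₀ (by positivity)]
        linarith [hb3]
      have h5 : δ' * dot x y ≤ δ' * |dot x y| :=
        mul_le_mul_of_nonneg_left (le_abs_self _) (le_of_lt hδ'pos)
      linarith
    have hge := hhs2 hmem
    have h6 : dot ((-δ') • x) x = -δ' * dot x x := dot_smul_left _ _ _
    have : (0 : ℝ) ≤ -δ' * dot x x := by rw [← h6]; exact hge
    nlinarith [dot_self_pos hne, hδ'pos]
  constructor
  · rw [hPc.frontier_eq]
    exact ⟨hvwP, hvwI⟩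
  · exact hlat
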